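/- arXiv:2409.05856 — 4 statements merged into one kernel-verified Lean document; each statement's English description precedes it below -/
import Mathlib

section
/- For every t ∈ (0,1), the Poisson kernel of the strip P(σ,t) = π·sin(πt)/(cosh(πσ) − cos(πt)) satisfies ∫_{-∞}^{∞} P(σ,t) dσ = 2π(1 − t). -/
open Real MeasureTheory Filter Topology

/-- For every `t ∈ (0,1)`, the Poisson kernel of the strip
`P(σ,t) = π·sin(πt)/(cosh(πσ) − cos(πt))` satisfies `∫_{-∞}^{∞} P(σ,t) dσ = 2π(1 − t)`. -/
theorem poisson_kernel_strip_integral (t : ℝ) (ht : t ∈ Set.Ioo (0 : ℝ) 1) :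
    ∫ σ : ℝ, π * Real.sin (π * t) / (Real.cosh (π * σ) - Real.cos (π * t))
      = 2 * π * (1 - t) := by
  obtain ⟨ht0, ht1⟩ := ht
  set S := Real.sin (π * t) with hSdef
  set C := Real.cos (π * t) with hCdef
  have hπ : (0:ℝ) < π := Real.pi_pos
  have hS : 0 < S := Real.sin_pos_of_pos_of_lt_pi (by positivity)
    (by nlinarith)
  have hC1 : C < 1 := by
    have h1 : S ^ 2 + C ^ 2 = 1 := Real.sin_sq_add_cos_sq (π * t)
    nlinarith
  have hCge : -1 ≤ C := Real.neg_one_le_cos (π * t)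
  have hden : ∀ σ : ℝ, 0 < Real.cosh (π * σ) - C := fun σ => by
    have := Real.one_le_cosh (π * σ); linarith
  set f' : ℝ → ℝ := fun σ => π * S / (Real.cosh (π * σ) - C) with hf'def
  set F : ℝ → ℝ := fun σ => 2 * Real.arctan ((Real.exp (π * σ) - C) / S) with hFdef
  -- derivative
  have key : ∀ σ : ℝ, HasDerivAt F (f' σ) σ := by
    intro σ
    have he : HasDerivAt (fun x : ℝ => Real.exp (π * x)) (Real.exp (π * σ) * π) σ := by
      simpa using ((hasDerivAt_id σ).const_mul π).exp
    have h2 : HasDerivAt (fun x : ℝ => (Real.exp (π * x) - C) / S)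
        (Real.exp (π * σ) * π / S) σ := (he.sub_const C).div_const S
    have h3 := ((Real.hasDerivAt_arctan ((Real.exp (π * σ) - C) / S)).comp σ h2).const_mul 2
    refine h3.congr_deriv (Eq.symm ?_)
    set e := Real.exp (π * σ) with hedef
    have hepos : 0 < e := Real.exp_pos _
    have h1 : S ^ 2 + C ^ 2 = 1 := Real.sin_sq_add_cos_sq (π * t)
    have hq : Real.cosh (π * σ) - C = (e ^ 2 - 2 * C * e + 1) / (2 * e) := by
      rw [Real.cosh_eq, Real.exp_neg]
      field_simp
      ring
    have hqpos : 0 < e ^ 2 - 2 * C * e + 1 := by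
      have h := hden σ
      rw [hq, div_pos_iff] at h
      rcases h with ⟨h, _⟩ | ⟨_, h⟩
      · exact h
      · linarith
    have hA : 1 + ((e - C) / S) ^ 2 = (e ^ 2 - 2 * C * e + 1) / S ^ 2 := by
      field_simp
      linear_combination h1
    show π * S / (Real.cosh (π * σ) - C) = _
    rw [hq, hA]
    field_simp
  -- nonnegativity and integrability
  have hf'pos : ∀ σ, 0 < f' σ := fun σ => div_pos (by positivity) (hden σ)
  have hcont : Continuous f' := by
    apply Continuous.div (by continuity) (by continuity)
    exact fun σ => ne_of_gt (hden σ)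
  have hcoshge : ∀ σ : ℝ, 1 + σ ^ 2 ≤ Real.cosh (π * σ) := by
    intro σ
    have h3 : Real.cosh (π * σ / 2) ^ 2 = Real.sinh (π * σ / 2) ^ 2 + 1 := Real.cosh_sq _
    have h2 : Real.cosh (π * σ) = 2 * Real.sinh (π * σ / 2) ^ 2 + 1 := by
      have h2' := Real.cosh_two_mul (π * σ / 2)
      rw [show 2 * (π * σ / 2) = π * σ by ring] at h2'
      linarith
    have h4 : (π * σ / 2) ^ 2 ≤ Real.sinh (π * σ / 2) ^ 2 := by
      rcases le_or_gt 0 (π * σ / 2) with h | h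
      · rcases eq_or_lt_of_le h with h' | h'
        · rw [← h']; simp
        · have := (Real.self_lt_sinh_iff).2 h'
          nlinarith
      · have h5 : 0 < -(π * σ / 2) := by linarith
        have := (Real.self_lt_sinh_iff).2 h5
        rw [Real.sinh_neg] at this
        nlinarith
    have hπ2 : (2:ℝ) ≤ π ^ 2 / 2 := by nlinarith [Real.pi_gt_three]
    nlinarith [sq_nonneg σ]
  set c : ℝ := min (1 - C) 1 with hcdef
  have hc0 : 0 < c := lt_min (by linarith) one_pos
  have hbound : ∀ σ : ℝ, ‖f' σ‖ ≤ (π * S / c) * (1 + σ ^ 2)⁻¹ := by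
    intro σ
    rw [Real.norm_eq_abs, abs_of_pos (hf'pos σ)]
    have hden2 : c * (1 + σ ^ 2) ≤ Real.cosh (π * σ) - C := by
      have h1 := hcoshge σ
      have h2 : c ≤ 1 - C := min_le_left _ _
      have h3 : c ≤ 1 := min_le_right _ _
      nlinarith [sq_nonneg σ]
    calc π * S / (Real.cosh (π * σ) - C) ≤ π * S / (c * (1 + σ ^ 2)) := by gcongr
      _ = π * S / c * (1 + σ ^ 2)⁻¹ := by rw [div_mul_eq_div_div, div_eq_mul_inv (π * S / c)]
  have hint : Integrable f' := by
    apply Integrable.mono' ((integrable_inv_one_add_sq).const_mul (π * S / c))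
      hcont.aestronglyMeasurable
    exact Filter.Eventually.of_forall hbound
  -- limits
  have htop : Tendsto F atTop (𝓝 π) := by
    have h1 : Tendsto (fun σ : ℝ => (Real.exp (π * σ) - C) / S) atTop atTop := by
      apply Tendsto.atTop_div_const hS
      apply tendsto_atTop_add_const_right
      exact Real.tendsto_exp_atTop.comp (tendsto_id.const_mul_atTop hπ)
    have h2 : Tendsto (fun σ : ℝ => Real.arctan ((Real.exp (π * σ) - C) / S)) atTop
        (𝓝 (π / 2)) := (Real.tendsto_arctan_atTop.mono_right nhdsWithin_le_nhds).comp h1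
    have h3 := h2.const_mul 2
    rw [show (2:ℝ) * (π / 2) = π by ring] at h3
    exact h3
  have hbot : Tendsto F atBot (𝓝 (2 * Real.arctan ((0 - C) / S))) := by
    have h1 : Tendsto (fun σ : ℝ => (Real.exp (π * σ) - C) / S) atBot
        (𝓝 ((0 - C) / S)) := by
      apply Tendsto.div_const
      apply Tendsto.sub_const
      exact Real.tendsto_exp_atBot.comp (tendsto_id.const_mul_atBot hπ)
    exact ((Real.continuous_arctan.tendsto _).comp h1).const_mul 2
  have harc : Real.arctan (C / S) = π / 2 - π * t := by
    have h1 : C / S = Real.tan (π / 2 - π * t) := by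
      rw [Real.tan_pi_div_two_sub, Real.tan_eq_sin_div_cos, inv_div]
    rw [h1, Real.arctan_tan] <;> nlinarith
  have hI : (∫ σ : ℝ, π * S / (Real.cosh (π * σ) - C))
      = π - 2 * Real.arctan ((0 - C) / S) := by
    simpa using integral_of_hasDerivAt_of_tendsto key hint hbot htop
  rw [hI]
  have harc2 : Real.arctan ((0 - C) / S) = -(π / 2 - π * t) := by
    rw [show (0 - C) / S = -(C / S) by ring, Real.arctan_neg, harc]
  rw [harc2]
  ring
end

section
/- Let M > 0, let n ≥ 1 be a real number, and let f₀, f₁ : ℝ → ℝ be continuous functions with |f₀(σ)| ≤ M and |f₁(σ)| ≤ M for all σ. Set ε = sup_{|σ| ≤ 2n} max(|f₀(σ)|, |f₁(σ)|) and define w(s,t) = (1/2π) ∫_{-∞}^{∞} ( P(σ−s,t)·f₀(σ) + P(σ−s,1−t)·f₁(σ) ) dσ for (s,t) ∈ ℝ × (0,1), where P(σ,t) = π·sin(πt)/(cosh(πσ) − cos(πt)). Then for all s with |s| ≤ n and all t ∈ (0,1), one has |w(s,t)| ≤ ε + 4M·e^{−n}. -/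
open Real MeasureTheory Set Filter
open scoped Topology

lemma half_exp_abs_le_cosh (x : ℝ) : Real.exp |x| / 2 ≤ Real.cosh x := by
  rw [Real.cosh_eq]
  rcases abs_cases x with ⟨h, _⟩ | ⟨h, _⟩
  · rw [h]; have := (Real.exp_pos (-x)).le; linarith
  · rw [h]; have := (Real.exp_pos x).le; linarith

lemma cosh_le_exp_abs (x : ℝ) : Real.cosh x ≤ Real.exp |x| := by
  rw [Real.cosh_eq]
  rcases abs_cases x with ⟨h, h2⟩ | ⟨h, h2⟩
  · rw [h]
    have : Real.exp (-x) ≤ Real.exp x := Real.exp_le_exp.2 (by linarith)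
    linarith
  · rw [h]
    have : Real.exp x ≤ Real.exp (-x) := Real.exp_le_exp.2 (by linarith)
    linarith

lemma integrable_exp_neg_pi_abs (s : ℝ) :
    Integrable (fun x : ℝ => Real.exp (-(π * |x - s|))) := by
  have h1 : IntegrableOn (fun x : ℝ => Real.exp (-(π * |x|))) (Ici 0) := by
    rw [integrableOn_Ici_iff_integrableOn_Ioi]
    exact (exp_neg_integrableOn_Ioi 0 Real.pi_pos).congr_fun
      (fun x hx => by simp only [abs_of_pos (mem_Ioi.1 hx), neg_mul]) measurableSet_Ioi
  have h2 : IntegrableOn (fun x : ℝ => Real.exp (-(π * |x|))) (Iio 0) := by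
    have h3 : Integrable ((Ici (0:ℝ)).indicator (fun x : ℝ => Real.exp (-(π * |x|)))) :=
      (integrable_indicator_iff measurableSet_Ici).2 h1
    have h4 := h3.comp_neg
    have h5 : (fun x : ℝ => (Ici (0:ℝ)).indicator (fun x : ℝ => Real.exp (-(π * |x|))) (-x))
        = (Iic (0:ℝ)).indicator (fun x : ℝ => Real.exp (-(π * |x|))) := by
      funext x
      by_cases hx : x ≤ 0
      · rw [Set.indicator_of_mem (by simpa using hx), Set.indicator_of_mem (by simpa using hx),
          abs_neg]
      · rw [Set.indicator_of_notMem (by simpa using hx),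
          Set.indicator_of_notMem (by simpa using hx)]
    rw [h5] at h4
    exact ((integrable_indicator_iff measurableSet_Iic).1 h4).mono_set Iio_subset_Iic_self
  have h6 : IntegrableOn (fun x : ℝ => Real.exp (-(π * |x|))) (Iio 0 ∪ Ici 0) := h2.union h1
  rw [Iio_union_Ici] at h6
  exact (integrableOn_univ.1 h6).comp_sub_right s

set_option maxHeartbeats 1000000 in
/-- If `|f₀|, |f₁| ≤ M` everywhere and
`ε = sup_{|σ| ≤ 2n} max(|f₀(σ)|, |f₁(σ)|)`, then the harmonic extension
`w(s,t) = (1/2π) ∫ ( P(σ−s,t) f₀(σ) + P(σ−s,1−t) f₁(σ) ) dσ` satisfies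
`|w(s,t)| ≤ ε + 4M e^{−n}` for `|s| ≤ n`, `t ∈ (0,1)`. -/
theorem poisson_extension_interior_bound
    (M n : ℝ) (hM : 0 < M) (hn : 1 ≤ n)
    (f₀ f₁ : ℝ → ℝ) (hc₀ : Continuous f₀) (hc₁ : Continuous f₁)
    (hb₀ : ∀ σ, |f₀ σ| ≤ M) (hb₁ : ∀ σ, |f₁ σ| ≤ M)
    (ε : ℝ)
    (hε : ε = sSup ((fun σ => max |f₀ σ| |f₁ σ|) '' Set.Icc (-(2 * n)) (2 * n)))
    (s t : ℝ) (hs : |s| ≤ n) (ht : t ∈ Set.Ioo (0 : ℝ) 1) :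
    |(1 / (2 * π)) * ∫ σ : ℝ,
        (π * Real.sin (π * t) / (Real.cosh (π * (σ - s)) - Real.cos (π * t)) * f₀ σ
          + π * Real.sin (π * (1 - t)) / (Real.cosh (π * (σ - s)) - Real.cos (π * (1 - t)))
              * f₁ σ)|
      ≤ ε + 4 * M * Real.exp (-n) := by
  obtain ⟨ht0, ht1⟩ := ht
  have hπ := Real.pi_pos
  have hπ3 := Real.pi_gt_three
  have hn0 : (0:ℝ) < n := lt_of_lt_of_le one_pos hn
  set c := Real.sin (π * t) with hcdef
  set b := Real.cos (π * t) with hbdef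
  have hc : 0 < c := Real.sin_pos_of_pos_of_lt_pi (by positivity) (by nlinarith)
  have hc1 : c ≤ 1 := Real.sin_le_one _
  have hbc : b ^ 2 + c ^ 2 = 1 := by rw [hcdef, hbdef]; exact Real.cos_sq_add_sin_sq _
  have hb1 : b < 1 := by nlinarith
  have hb2 : -1 < b := by nlinarith
  have hrw : ∀ σ : ℝ,
      π * Real.sin (π * (1 - t)) / (Real.cosh (π * (σ - s)) - Real.cos (π * (1 - t)))
        = π * c / (Real.cosh (π * (σ - s)) + b) := by
    intro σ
    rw [show π * (1 - t) = π - π * t by ring, Real.sin_pi_sub, Real.cos_pi_sub, sub_neg_eq_add]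
  simp only [hrw]
  -- basic positivity
  have hden0 : ∀ x : ℝ, 0 < Real.cosh x - b := fun x => by
    have := Real.one_le_cosh x; linarith
  have hden1 : ∀ x : ℝ, 0 < Real.cosh x + b := fun x => by
    have := Real.one_le_cosh x; linarith
  set K : ℝ → ℝ := fun σ =>
    2 * π * c * Real.cosh (π * (σ - s)) / (c ^ 2 + Real.sinh (π * (σ - s)) ^ 2) with hKdef
  set h : ℝ → ℝ := fun σ => max |f₀ σ| |f₁ σ| with hhdef
  have hdenK : ∀ x : ℝ, 0 < c ^ 2 + Real.sinh x ^ 2 := fun x => by positivity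
  have hKsum : ∀ σ : ℝ,
      π * c / (Real.cosh (π * (σ - s)) - b) + π * c / (Real.cosh (π * (σ - s)) + b) = K σ := by
    intro σ
    have h1 := hden0 (π * (σ - s)); have h2 := hden1 (π * (σ - s))
    have h4 := hdenK (π * (σ - s))
    have h3 : Real.cosh (π * (σ - s)) ^ 2 = 1 + Real.sinh (π * (σ - s)) ^ 2 := by
      rw [Real.cosh_sq]; ring
    rw [show K σ = 2 * π * c * Real.cosh (π * (σ - s)) / (c ^ 2 + Real.sinh (π * (σ - s)) ^ 2) from rfl]
    rw [div_add_div _ _ (ne_of_gt h1) (ne_of_gt h2), div_eq_div_iff (by positivity) (ne_of_gt h4)]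
    linear_combination (2 * π * c * Real.cosh (π * (σ - s))) * hbc - (2 * π * c * Real.cosh (π * (σ - s))) * h3
  have hKpos : ∀ σ : ℝ, 0 ≤ K σ := by
    intro σ
    have h1 := (Real.cosh_pos (π * (σ - s))).le
    have h2 := hdenK (π * (σ - s))
    show 0 ≤ 2 * π * c * Real.cosh (π * (σ - s)) / (c ^ 2 + Real.sinh (π * (σ - s)) ^ 2)
    positivity
  have hhn : ∀ σ : ℝ, 0 ≤ h σ := fun σ => le_trans (abs_nonneg _) (le_max_left _ _)
  have hhM : ∀ σ : ℝ, h σ ≤ M := fun σ => max_le (hb₀ σ) (hb₁ σ)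
  -- pointwise bound of the integrand
  have hIb : ∀ σ : ℝ,
      |π * c / (Real.cosh (π * (σ - s)) - b) * f₀ σ
        + π * c / (Real.cosh (π * (σ - s)) + b) * f₁ σ| ≤ K σ * h σ := by
    intro σ
    have h1 := hden0 (π * (σ - s)); have h2 := hden1 (π * (σ - s))
    have hp0 : 0 < π * c / (Real.cosh (π * (σ - s)) - b) := by positivity
    have hp1 : 0 < π * c / (Real.cosh (π * (σ - s)) + b) := by positivity
    calc |π * c / (Real.cosh (π * (σ - s)) - b) * f₀ σ
        + π * c / (Real.cosh (π * (σ - s)) + b) * f₁ σ|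
        ≤ |π * c / (Real.cosh (π * (σ - s)) - b) * f₀ σ|
          + |π * c / (Real.cosh (π * (σ - s)) + b) * f₁ σ| := abs_add_le _ _
      _ = π * c / (Real.cosh (π * (σ - s)) - b) * |f₀ σ|
          + π * c / (Real.cosh (π * (σ - s)) + b) * |f₁ σ| := by
          rw [abs_mul, abs_mul, abs_of_pos hp0, abs_of_pos hp1]
      _ ≤ π * c / (Real.cosh (π * (σ - s)) - b) * h σ
          + π * c / (Real.cosh (π * (σ - s)) + b) * h σ := by
          gcongr
          · exact le_max_left _ _
          · exact le_max_right _ _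
      _ = K σ * h σ := by rw [← hKsum σ]; ring
  -- global decay bound
  have hxabs : ∀ σ : ℝ, |π * (σ - s)| = π * |σ - s| := fun σ => by
    rw [abs_mul, abs_of_pos hπ]
  have hKle : ∀ σ : ℝ, K σ ≤ 4 * π / c * Real.exp (-(π * |σ - s|)) := by
    intro σ
    have hcosh := half_exp_abs_le_cosh (π * (σ - s))
    have hcpos := Real.cosh_pos (π * (σ - s))
    have hexppos := Real.exp_pos |π * (σ - s)|
    have h3 : Real.cosh (π * (σ - s)) ^ 2 = 1 + Real.sinh (π * (σ - s)) ^ 2 := by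
      rw [Real.cosh_sq]; ring
    have hd : c ^ 2 * Real.cosh (π * (σ - s)) ^ 2 ≤ c ^ 2 + Real.sinh (π * (σ - s)) ^ 2 := by
      nlinarith [sq_nonneg (Real.sinh (π * (σ - s)))]
    calc K σ = 2 * π * c * Real.cosh (π * (σ - s)) / (c ^ 2 + Real.sinh (π * (σ - s)) ^ 2) := rfl
      _ ≤ 2 * π * c * Real.cosh (π * (σ - s)) / (c ^ 2 * Real.cosh (π * (σ - s)) ^ 2) := by
          exact div_le_div_of_nonneg_left (by positivity) (by positivity) hd
      _ = 2 * π / (c * Real.cosh (π * (σ - s))) := by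
          field_simp
      _ ≤ 2 * π / (c * (Real.exp |π * (σ - s)| / 2)) := by
          apply div_le_div_of_nonneg_left (by positivity) (by positivity)
          exact mul_le_mul_of_nonneg_left hcosh hc.le
      _ = 4 * π / c * Real.exp (-|π * (σ - s)|) := by
          rw [Real.exp_neg]
          field_simp
          ring
      _ = 4 * π / c * Real.exp (-(π * |σ - s|)) := by rw [hxabs]
  -- outer decay bound
  have hKouter : ∀ σ : ℝ, n ≤ |σ - s| → K σ ≤ 32 * π * Real.exp (-(π * |σ - s|)) := by
    intro σ hσ
    have hax : |π * (σ - s)| = π * |σ - s| := hxabs σ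
    have hxge : π ≤ |π * (σ - s)| := by rw [hax]; nlinarith
    have hexppos := Real.exp_pos |π * (σ - s)|
    have hsinh : Real.exp |π * (σ - s)| / 4 ≤ Real.sinh |π * (σ - s)| := by
      rw [Real.sinh_eq]
      have h2 : Real.exp (-|π * (σ - s)|) ≤ Real.exp |π * (σ - s)| / 2 := by
        have h7 : (2:ℝ) ≤ Real.exp (2 * |π * (σ - s)|) := by
          have := Real.add_one_le_exp (2 * |π * (σ - s)|)
          nlinarith
        rw [Real.exp_neg, inv_le_iff_one_le_mul₀ (Real.exp_pos _)]
        calc (1:ℝ) = 2 / 2 := by norm_num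
          _ ≤ Real.exp (2 * |π * (σ - s)|) / 2 := by linarith
          _ = Real.exp |π * (σ - s)| / 2 * Real.exp |π * (σ - s)| := by
              rw [two_mul, Real.exp_add]; ring
      linarith
    have hsinhsq : (Real.exp |π * (σ - s)| / 4) ^ 2 ≤ Real.sinh (π * (σ - s)) ^ 2 := by
      rw [show Real.sinh (π * (σ - s)) ^ 2 = Real.sinh |π * (σ - s)| ^ 2 by
        rcases abs_cases (π * (σ - s)) with ⟨hh, _⟩ | ⟨hh, _⟩
        · rw [hh]
        · rw [hh, Real.sinh_neg]; ring]
      have : 0 ≤ Real.exp |π * (σ - s)| / 4 := by positivity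
      exact pow_le_pow_left₀ this hsinh 2 |>.trans_eq rfl
    have hcosh2 : Real.cosh (π * (σ - s)) ≤ Real.exp |π * (σ - s)| := cosh_le_exp_abs _
    have hsq : 0 < (Real.exp |π * (σ - s)| / 4) ^ 2 := by positivity
    calc K σ = 2 * π * c * Real.cosh (π * (σ - s)) / (c ^ 2 + Real.sinh (π * (σ - s)) ^ 2) := rfl
      _ ≤ 2 * π * c * Real.cosh (π * (σ - s)) / (Real.exp |π * (σ - s)| / 4) ^ 2 := by
          refine div_le_div_of_nonneg_left (by positivity) hsq ?_
          exact hsinhsq.trans (by nlinarith [sq_nonneg c])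

      _ ≤ 2 * π * 1 * Real.exp |π * (σ - s)| / (Real.exp |π * (σ - s)| / 4) ^ 2 := by
          gcongr
      _ = 32 * π * Real.exp (-|π * (σ - s)|) := by
          rw [Real.exp_neg]
          field_simp
          ring
      _ = 32 * π * Real.exp (-(π * |σ - s|)) := by rw [hax]
  -- continuity
  have hcontK : Continuous K := by
    apply Continuous.div
    · fun_prop
    · fun_prop
    · intro x; exact ne_of_gt (hdenK (π * (x - s)))
  have hconth : Continuous h := hc₀.abs.max hc₁.abs
  have hcontI : Continuous (fun σ => π * c / (Real.cosh (π * (σ - s)) - b) * f₀ σ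
      + π * c / (Real.cosh (π * (σ - s)) + b) * f₁ σ) := by
    apply Continuous.add
    · exact (Continuous.div continuous_const (by fun_prop) fun x => ne_of_gt (hden0 _)).mul hc₀
    · exact (Continuous.div continuous_const (by fun_prop) fun x => ne_of_gt (hden1 _)).mul hc₁
  -- integrability
  have hexp := integrable_exp_neg_pi_abs s
  have hgint : Integrable (fun σ => K σ * h σ) := by
    refine (hexp.const_mul (4 * π / c * M)).mono' ((hcontK.mul hconth).aestronglyMeasurable)
      (ae_of_all _ fun σ => ?_)
    rw [Real.norm_eq_abs, abs_of_nonneg (mul_nonneg (hKpos σ) (hhn σ))]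
    calc K σ * h σ ≤ (4 * π / c * Real.exp (-(π * |σ - s|))) * M :=
          mul_le_mul (hKle σ) (hhM σ) (hhn σ) (by positivity)
      _ = 4 * π / c * M * Real.exp (-(π * |σ - s|)) := by ring
  have hIint : Integrable (fun σ => π * c / (Real.cosh (π * (σ - s)) - b) * f₀ σ
      + π * c / (Real.cosh (π * (σ - s)) + b) * f₁ σ) := by
    refine hgint.mono' hcontI.aestronglyMeasurable (ae_of_all _ fun σ => ?_)
    rw [Real.norm_eq_abs]
    exact hIb σ
  set J : ℝ := ∫ σ : ℝ, (π * c / (Real.cosh (π * (σ - s)) - b) * f₀ σ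
      + π * c / (Real.cosh (π * (σ - s)) + b) * f₁ σ) with hJdef
  have hAmeas : MeasurableSet (Icc (-(2*n)) (2*n)) := measurableSet_Icc
  have habs_le : |J| ≤ ∫ σ : ℝ, K σ * h σ := by
    calc |J| ≤ ∫ σ : ℝ, |π * c / (Real.cosh (π * (σ - s)) - b) * f₀ σ
          + π * c / (Real.cosh (π * (σ - s)) + b) * f₁ σ| := by
          rw [hJdef]
          have h0 := norm_integral_le_integral_norm (μ := volume)
            (f := fun σ => π * c / (Real.cosh (π * (σ - s)) - b) * f₀ σ
              + π * c / (Real.cosh (π * (σ - s)) + b) * f₁ σ)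
          simpa only [Real.norm_eq_abs] using h0
      _ ≤ ∫ σ : ℝ, K σ * h σ := integral_mono hIint.abs hgint hIb
  -- inner region
  have hbdd : BddAbove (h '' Icc (-(2*n)) (2*n)) :=
    (isCompact_Icc.image_of_continuousOn hconth.continuousOn).bddAbove
  have hA : ∀ σ ∈ Icc (-(2*n)) (2*n), h σ ≤ ε := fun σ hσ => by
    rw [hε]; exact le_csSup hbdd (mem_image_of_mem _ hσ)
  have hε0 : 0 ≤ ε := le_trans (hhn 0) (hA 0 ⟨by linarith, by linarith⟩)
  have hKIcc : IntegrableOn K (Icc (-(2*n)) (2*n)) := hcontK.integrableOn_Icc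
  have hFder : ∀ σ : ℝ, HasDerivAt (fun y => 2 * Real.arctan (Real.sinh (π * (y - s)) / c))
      (K σ) σ := by
    intro σ
    have h1 : HasDerivAt (fun y : ℝ => π * (y - s)) π σ := by
      simpa using ((hasDerivAt_id σ).sub_const s).const_mul π
    have h2 : HasDerivAt (fun y : ℝ => Real.sinh (π * (y - s))) (Real.cosh (π * (σ - s)) * π) σ :=
      h1.sinh
    have h3 := h2.div_const c
    have h4 := h3.arctan
    have h5 := h4.const_mul (2:ℝ)
    refine h5.congr_deriv ?_
    rw [show K σ = 2 * π * c * Real.cosh (π * (σ - s)) / (c ^ 2 + Real.sinh (π * (σ - s)) ^ 2)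
      from rfl]
    have hden := hdenK (π * (σ - s))
    field_simp
  have hKval : ∫ σ in Icc (-(2*n)) (2*n), K σ ≤ 2 * π := by
    rw [MeasureTheory.integral_Icc_eq_integral_Ioc,
      ← intervalIntegral.integral_of_le (by linarith : -(2*n) ≤ 2*n),
      intervalIntegral.integral_eq_sub_of_hasDerivAt (fun σ _ => hFder σ)
        (hcontK.intervalIntegrable _ _)]
    have l1 := Real.arctan_lt_pi_div_two (Real.sinh (π * (2*n - s)) / c)
    have l2 := Real.neg_pi_div_two_lt_arctan (Real.sinh (π * (-(2*n) - s)) / c)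
    linarith
  have hinner : (∫ σ in Icc (-(2*n)) (2*n), K σ * h σ) ≤ 2 * π * ε := by
    calc (∫ σ in Icc (-(2*n)) (2*n), K σ * h σ)
        ≤ ∫ σ in Icc (-(2*n)) (2*n), ε * K σ := by
          refine setIntegral_mono_on hgint.integrableOn (hKIcc.const_mul ε) hAmeas fun σ hσ => ?_
          calc K σ * h σ ≤ K σ * ε := mul_le_mul_of_nonneg_left (hA σ hσ) (hKpos σ)
            _ = ε * K σ := mul_comm _ _
      _ = ε * ∫ σ in Icc (-(2*n)) (2*n), K σ := integral_const_mul ε _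
      _ ≤ ε * (2 * π) := mul_le_mul_of_nonneg_left hKval hε0
      _ = 2 * π * ε := by ring
  -- outer region
  have hsub1 : Ioo (s - n) (s + n) ⊆ Icc (-(2*n)) (2*n) := by
    intro x hx
    obtain ⟨h1, h2⟩ := hx
    obtain ⟨hs1, hs2⟩ := abs_le.1 hs
    exact ⟨by linarith, by linarith⟩
  have hcsub : (Icc (-(2*n)) (2*n))ᶜ ⊆ (Ioo (s - n) (s + n))ᶜ := compl_subset_compl.2 hsub1
  have houtptw : ∀ σ ∈ (Icc (-(2*n)) (2*n))ᶜ,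
      K σ * h σ ≤ 32 * π * M * Real.exp (-(π * |σ - s|)) := by
    intro σ hσ
    have hge : n ≤ |σ - s| := by
      simp only [mem_compl_iff, mem_Icc, not_and_or, not_le] at hσ
      obtain ⟨hs1, hs2⟩ := abs_le.1 hs
      rcases hσ with h' | h'
      · exact le_trans (by linarith : n ≤ -(σ - s)) (neg_le_abs _)
      · exact le_trans (by linarith : n ≤ σ - s) (le_abs_self _)
    calc K σ * h σ ≤ (32 * π * Real.exp (-(π * |σ - s|))) * M :=
          mul_le_mul (hKouter σ hge) (hhM σ) (hhn σ) (by positivity)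
      _ = 32 * π * M * Real.exp (-(π * |σ - s|)) := by ring
  have hexpC : Integrable (fun σ : ℝ => 32 * π * M * Real.exp (-(π * |σ - s|))) :=
    hexp.const_mul _
  have hIic_val : ∫ σ in Iic (s - n), Real.exp (-(π * |σ - s|)) = Real.exp (-(π * n)) / π := by
    have heq : EqOn (fun σ : ℝ => Real.exp (-(π * |σ - s|)))
        (fun σ : ℝ => Real.exp (π * (σ - s))) (Iic (s - n)) := by
      intro σ hσ
      simp only [mem_Iic] at hσ
      show Real.exp (-(π * |σ - s|)) = Real.exp (π * (σ - s))
      rw [abs_of_nonpos (by linarith)]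
      ring_nf
    rw [setIntegral_congr_fun measurableSet_Iic heq]
    have hder : ∀ x ∈ Iic (s - n),
        HasDerivAt (fun y : ℝ => Real.exp (π * (y - s)) / π) (Real.exp (π * (x - s))) x := by
      intro x _
      have h1 : HasDerivAt (fun y : ℝ => π * (y - s)) π x := by
        simpa using ((hasDerivAt_id x).sub_const s).const_mul π
      have h2 := (Real.hasDerivAt_exp (π * (x - s))).comp x h1
      have h3 := h2.div_const π
      refine h3.congr_deriv ?_
      rw [mul_div_assoc, div_self hπ.ne', mul_one]
    have hint : IntegrableOn (fun σ : ℝ => Real.exp (π * (σ - s))) (Iic (s - n)) :=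
      (hexp.integrableOn).congr_fun heq measurableSet_Iic
    have htend : Tendsto (fun y : ℝ => Real.exp (π * (y - s)) / π) atBot (𝓝 0) := by
      have hbase : Tendsto (fun y : ℝ => y - s) atBot atBot :=
        tendsto_atBot_add_const_right _ _ tendsto_id
      have h1 : Tendsto (fun y : ℝ => π * (y - s)) atBot atBot :=
        Tendsto.const_mul_atBot hπ hbase
      have h2 := Real.tendsto_exp_atBot.comp h1
      have h3 := h2.div_const π
      simpa using h3
    rw [integral_Iic_of_hasDerivAt_of_tendsto' hder hint htend]
    rw [show s - n - s = -n by ring, sub_zero, mul_neg]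
  have hIci_val : ∫ σ in Ici (s + n), Real.exp (-(π * |σ - s|)) = Real.exp (-(π * n)) / π := by
    rw [MeasureTheory.integral_Ici_eq_integral_Ioi]
    have heq : EqOn (fun σ : ℝ => Real.exp (-(π * |σ - s|)))
        (fun σ : ℝ => Real.exp (-(π * (σ - s)))) (Ioi (s + n)) := by
      intro σ hσ
      simp only [mem_Ioi] at hσ
      show Real.exp (-(π * |σ - s|)) = Real.exp (-(π * (σ - s)))
      rw [abs_of_nonneg (by linarith)]
    rw [setIntegral_congr_fun measurableSet_Ioi heq]
    have hder : ∀ x ∈ Ici (s + n),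
        HasDerivAt (fun y : ℝ => -(Real.exp (-(π * (y - s))) / π)) (Real.exp (-(π * (x - s)))) x := by
      intro x _
      have h1 : HasDerivAt (fun y : ℝ => -(π * (y - s))) (-π) x := by
        simpa using ((hasDerivAt_id x).sub_const s).const_mul (-π)
      have h2 := (Real.hasDerivAt_exp (-(π * (x - s)))).comp x h1
      have h3 := (h2.div_const π).neg
      refine h3.congr_deriv ?_
      rw [mul_div_assoc, neg_div, div_self hπ.ne', mul_neg, mul_one, neg_neg]
    have hint : IntegrableOn (fun σ : ℝ => Real.exp (-(π * (σ - s)))) (Ioi (s + n)) :=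
      (hexp.integrableOn).congr_fun heq measurableSet_Ioi
    have htend : Tendsto (fun y : ℝ => -(Real.exp (-(π * (y - s))) / π)) atTop (𝓝 0) := by
      have hbase : Tendsto (fun y : ℝ => y - s) atTop atTop :=
        tendsto_atTop_add_const_right _ _ tendsto_id
      have h1 : Tendsto (fun y : ℝ => π * (y - s)) atTop atTop :=
        Tendsto.const_mul_atTop hπ hbase
      have h1' : Tendsto (fun y : ℝ => -(π * (y - s))) atTop atBot :=
        tendsto_neg_atTop_atBot.comp h1
      have h2 := Real.tendsto_exp_atBot.comp h1'
      have h3 := (h2.div_const π).neg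
      simpa using h3
    rw [integral_Ioi_of_hasDerivAt_of_tendsto' hder hint htend]
    rw [show s + n - s = n by ring, zero_sub, neg_neg]
  have houter : (∫ σ in (Icc (-(2*n)) (2*n))ᶜ, K σ * h σ) ≤ 64 * M * Real.exp (-(π * n)) := by
    have hcompl : (Ioo (s - n) (s + n))ᶜ = Iic (s - n) ∪ Ici (s + n) := by
      ext x
      simp only [mem_compl_iff, mem_Ioo, not_and_or, not_lt, mem_union, mem_Iic, mem_Ici]
    calc (∫ σ in (Icc (-(2*n)) (2*n))ᶜ, K σ * h σ)
        ≤ ∫ σ in (Icc (-(2*n)) (2*n))ᶜ, 32 * π * M * Real.exp (-(π * |σ - s|)) :=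
          setIntegral_mono_on hgint.integrableOn hexpC.integrableOn hAmeas.compl houtptw
      _ ≤ ∫ σ in (Ioo (s - n) (s + n))ᶜ, 32 * π * M * Real.exp (-(π * |σ - s|)) :=
          setIntegral_mono_set hexpC.integrableOn (ae_of_all _ fun σ => by positivity)
            (HasSubset.Subset.eventuallyLE hcsub)
      _ = 32 * π * M * ∫ σ in (Ioo (s - n) (s + n))ᶜ, Real.exp (-(π * |σ - s|)) :=
          integral_const_mul _ _
      _ = 32 * π * M * ((∫ σ in Iic (s - n), Real.exp (-(π * |σ - s|)))
            + ∫ σ in Ici (s + n), Real.exp (-(π * |σ - s|))) := by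
          rw [hcompl, setIntegral_union (Iic_disjoint_Ici.2 (by intro hcon; linarith))
            measurableSet_Ici hexp.integrableOn hexp.integrableOn]
      _ = 64 * M * Real.exp (-(π * n)) := by
          rw [hIic_val, hIci_val]
          field_simp
          ring
  have key : |J| ≤ 2 * π * ε + 64 * M * Real.exp (-(π * n)) := by
    calc |J| ≤ ∫ σ : ℝ, K σ * h σ := habs_le
      _ = (∫ σ in Icc (-(2*n)) (2*n), K σ * h σ)
          + ∫ σ in (Icc (-(2*n)) (2*n))ᶜ, K σ * h σ := (integral_add_compl hAmeas hgint).symm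
      _ ≤ 2 * π * ε + 64 * M * Real.exp (-(π * n)) := add_le_add hinner houter
  rw [abs_mul, abs_of_pos (by positivity : (0:ℝ) < 1 / (2 * π))]
  have hfin : Real.exp (-(π * n)) ≤ 1 / π * Real.exp (-n) := by
    have h1 : π ≤ Real.exp (π - 1) := by nlinarith [Real.add_one_le_exp (π - 1)]
    have h2 : Real.exp (-(π * n)) ≤ Real.exp (-(π - 1)) * Real.exp (-n) := by
      rw [← Real.exp_add]
      apply Real.exp_le_exp.2
      nlinarith
    have h3 : Real.exp (-(π - 1)) ≤ 1 / π := by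
      rw [Real.exp_neg, one_div]
      exact inv_anti₀ hπ h1
    calc Real.exp (-(π * n)) ≤ Real.exp (-(π - 1)) * Real.exp (-n) := h2
      _ ≤ 1 / π * Real.exp (-n) := mul_le_mul_of_nonneg_right h3 (Real.exp_pos _).le
  calc 1 / (2 * π) * |J| ≤ 1 / (2 * π) * (2 * π * ε + 64 * M * Real.exp (-(π * n))) :=
        mul_le_mul_of_nonneg_left key (by positivity)
    _ = ε + 32 / π * M * Real.exp (-(π * n)) := by field_simp; ring
    _ ≤ ε + 4 * M * Real.exp (-n) := by
        have h4 : 32 / π * M * Real.exp (-(π * n)) ≤ 4 * M * Real.exp (-n) := by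
          calc 32 / π * M * Real.exp (-(π * n)) ≤ 32 / π * M * (1 / π * Real.exp (-n)) :=
                mul_le_mul_of_nonneg_left hfin (by positivity)
            _ = 32 / π ^ 2 * M * Real.exp (-n) := by ring
            _ ≤ 4 * M * Real.exp (-n) := by
                have hπ2 : 9 ≤ π ^ 2 := by nlinarith
                have h5 : 32 / π ^ 2 ≤ 4 := by
                  rw [div_le_iff₀ (by positivity)]
                  nlinarith
                gcongr
        linarith
end

section
/- For R ≥ 2, define φ_R : (−R,R) × [0,1] → ℂ by φ_R(s,t) = (i/R²)·( c^{i(s+it)} + 1 )^{−1}, where c = R²/(R²−1) and c^{z} := exp(z·log c). Then (a) for all R ≥ 2 and all (s,t) ∈ (−R,R) × [0,1], the denominator c^{i(s+it)} + 1 is nonzero, so φ_R is well defined; and (b) sup_{(s,t) ∈ (−R,R) × [0,1]} |φ_R(s,t)| → 0 as R → ∞. -/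
/-- The local model `φ_R(s,t) = (i/R²)·( c^{i(s+it)} + 1 )⁻¹` for the Reidemeister II move,
with `c = R²/(R²−1)` and `c^z = exp(z·log c)`. -/
noncomputable def phiR (R s t : ℝ) : ℂ :=
  (Complex.I / (R : ℂ) ^ 2) *
    (Complex.exp (Complex.I * ((s : ℂ) + (t : ℂ) * Complex.I)
        * ((Real.log (R ^ 2 / (R ^ 2 - 1)) : ℝ) : ℂ)) + 1)⁻¹

lemma phiR_key (R s t : ℝ) (hR : 2 ≤ R) (hs : s ∈ Set.Ioo (-R) R)
    (_ht : t ∈ Set.Icc (0 : ℝ) 1) :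
    1 ≤ (Complex.exp (Complex.I * ((s : ℂ) + (t : ℂ) * Complex.I)
        * ((Real.log (R ^ 2 / (R ^ 2 - 1)) : ℝ) : ℂ)) + 1).re := by
  set L := Real.log (R ^ 2 / (R ^ 2 - 1)) with hLdef
  have hden : (0:ℝ) < R ^ 2 - 1 := by nlinarith
  have hL0 : 0 ≤ L := by
    apply Real.log_nonneg
    rw [le_div_iff₀ hden]; nlinarith
  have hL1 : L ≤ 1 / (R ^ 2 - 1) := by
    have := Real.log_le_sub_one_of_pos (x := R ^ 2 / (R ^ 2 - 1)) (by positivity)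
    have h2 : R ^ 2 / (R ^ 2 - 1) - 1 = 1 / (R ^ 2 - 1) := by
      field_simp; ring
    linarith [h2 ▸ this]
  have hsL : |s * L| ≤ 1 := by
    have hsabs : |s| ≤ R := le_of_lt (abs_lt.mpr ⟨hs.1, hs.2⟩)
    have : |s * L| = |s| * L := by rw [abs_mul, abs_of_nonneg hL0]
    rw [this]
    have h1 : |s| * L ≤ R * (1 / (R ^ 2 - 1)) := by
      apply mul_le_mul hsabs hL1 hL0 (by linarith)
    have h2 : R * (1 / (R ^ 2 - 1)) ≤ 1 := by
      rw [mul_one_div, div_le_one hden]; nlinarith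
    linarith
  have hz : (Complex.I * ((s : ℂ) + (t : ℂ) * Complex.I) * (L : ℂ)) =
      Complex.mk (-(t * L)) (s * L) := by
    apply Complex.ext <;> simp [Complex.ext_iff] <;> ring
  have hre : (Complex.exp (Complex.I * ((s : ℂ) + (t : ℂ) * Complex.I) * (L : ℂ))).re
      = Real.exp (-(t * L)) * Real.cos (s * L) := by
    rw [hz, Complex.exp_re]
  have hcos : 0 ≤ Real.cos (s * L) := by
    apply Real.cos_nonneg_of_mem_Icc
    have hpi : (1:ℝ) ≤ Real.pi / 2 := by linarith [Real.pi_gt_three]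
    constructor
    · linarith [abs_le.mp hsL |>.1]
    · linarith [abs_le.mp hsL |>.2]
  have : 0 ≤ Real.exp (-(t * L)) * Real.cos (s * L) :=
    mul_nonneg (Real.exp_nonneg _) hcos
  simp only [Complex.add_re, Complex.one_re, hre]
  linarith

lemma phiR_abs_le (R s t : ℝ) (hR : 2 ≤ R) (hs : s ∈ Set.Ioo (-R) R)
    (ht : t ∈ Set.Icc (0 : ℝ) 1) :
    ‖phiR R s t‖ ≤ 1 / R ^ 2 := by
  have hkey := phiR_key R s t hR hs ht
  set d := Complex.exp (Complex.I * ((s : ℂ) + (t : ℂ) * Complex.I)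
      * ((Real.log (R ^ 2 / (R ^ 2 - 1)) : ℝ) : ℂ)) + 1 with hd
  have habs : 1 ≤ ‖d‖ := le_trans hkey (Complex.re_le_norm d)
  have hR0 : (0:ℝ) < R := by linarith
  rw [phiR, norm_mul, norm_inv, norm_div]
  simp only [Complex.norm_I, norm_pow, Complex.norm_real, Real.norm_eq_abs, abs_of_pos hR0]
  rw [← hd, one_div]
  have h1 : ‖d‖⁻¹ ≤ 1 := inv_le_one_of_one_le₀ habs
  have h2 : (0:ℝ) ≤ (R ^ 2)⁻¹ := by positivity
  calc (R ^ 2)⁻¹ * ‖d‖⁻¹ ≤ (R ^ 2)⁻¹ * 1 := by gcongr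
    _ = (R ^ 2)⁻¹ := mul_one _

/-- (a) For `R ≥ 2` the denominator `c^{i(s+it)} + 1` never vanishes on
`(−R,R) × [0,1]`, so `φ_R` is well defined there; and
(b) `sup_{(s,t) ∈ (−R,R) × [0,1]} |φ_R(s,t)| → 0` as `R → ∞`. -/
theorem phiR_well_defined_and_sup_tendsto_zero :
    (∀ R : ℝ, 2 ≤ R → ∀ s t : ℝ, s ∈ Set.Ioo (-R) R → t ∈ Set.Icc (0 : ℝ) 1 →
      Complex.exp (Complex.I * ((s : ℂ) + (t : ℂ) * Complex.I)
          * ((Real.log (R ^ 2 / (R ^ 2 - 1)) : ℝ) : ℂ)) + 1 ≠ 0) ∧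
    Filter.Tendsto
      (fun R : ℝ =>
        sSup ((fun p : ℝ × ℝ => ‖phiR R p.1 p.2‖) ''
          (Set.Ioo (-R) R ×ˢ Set.Icc (0 : ℝ) 1)))
      Filter.atTop (nhds 0) := by
  constructor
  · intro R hR s t hs ht h0
    have h := phiR_key R s t hR hs ht
    rw [h0] at h
    simp at h
    linarith
  · have hbound : ∀ R : ℝ, 2 ≤ R →
        sSup ((fun p : ℝ × ℝ => ‖phiR R p.1 p.2‖) ''
          (Set.Ioo (-R) R ×ˢ Set.Icc (0 : ℝ) 1)) ≤ 1 / R ^ 2 := by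
      intro R hR
      apply Real.sSup_le
      · rintro x ⟨⟨s, t⟩, ⟨hs, ht⟩, rfl⟩
        exact phiR_abs_le R s t hR hs ht
      · positivity
    have hnonneg : ∀ R : ℝ, 0 ≤
        sSup ((fun p : ℝ × ℝ => ‖phiR R p.1 p.2‖) ''
          (Set.Ioo (-R) R ×ˢ Set.Icc (0 : ℝ) 1)) := by
      intro R
      apply Real.sSup_nonneg
      rintro x ⟨⟨s, t⟩, _, rfl⟩
      exact norm_nonneg _
    have hg : Filter.Tendsto (fun R : ℝ => 1 / R ^ 2) Filter.atTop (nhds 0) := by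
      have h1 : Filter.Tendsto (fun R : ℝ => R ^ 2) Filter.atTop Filter.atTop :=
        Filter.tendsto_pow_atTop (two_ne_zero)
      have h2 := tendsto_inv_atTop_zero.comp h1
      simpa [one_div, Function.comp_def] using h2
    apply squeeze_zero' (Filter.Eventually.of_forall hnonneg) _ hg
    filter_upwards [Filter.eventually_ge_atTop (2:ℝ)] with R hR
    exact hbound R hR
end

section
/- With A, d, ĥ as above (tensor algebra on {x_i} ∪ {a,b}, odd graded derivations d, ĥ with d(a)=b, d(b)=0, d(x_i) in the subalgebra on the x's, ĥ(b)=a, ĥ(a)=0, ĥ(x_i)=0), define a linear map h : A → A on each word w by h(w) = (1/n(w))·ĥ(w) if n(w) ≠ 0, and h(w) = 0 if n(w) = 0, where n(w) counts the occurrences of a and b in w. Then h ∘ d + d ∘ h = id − τ, where τ : A → A is the linear projection that fixes every word containing only letters from {x_i} and annihilates every word containing at least one a or b. In particular, the inclusion of the subalgebra generated by {x_i} into A is a quasi-isomorphism of chain complexes (with differential d). -/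
/-- The monomial (word) in the free (tensor) algebra on the generating set `I ⊕ Bool`,
where `Sum.inl i` is the generator `x_i`, `Sum.inr true` is `a` and `Sum.inr false` is `b`. -/
noncomputable def mono {I : Type*} (w : List (I ⊕ Bool)) : FreeAlgebra ℚ (I ⊕ Bool) :=
  (w.map (FreeAlgebra.ι ℚ)).prod

/-- The degree of a word: the sum of the degrees of its letters. -/
def degw {I : Type*} (g : (I ⊕ Bool) → ℤ) (w : List (I ⊕ Bool)) : ℤ := (w.map g).sum

/-- `n(w)`: the number of letters of the word `w` equal to `a` or `b`. -/
def nab {I : Type*} (w : List (I ⊕ Bool)) : ℕ := w.countP Sum.isRight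

section Aux

variable {I : Type*}

lemma mono_nil : mono ([] : List (I ⊕ Bool)) = 1 := rfl

lemma mono_cons (l : I ⊕ Bool) (w : List (I ⊕ Bool)) :
    mono (l :: w) = FreeAlgebra.ι ℚ l * mono w := by simp [mono]

lemma mono_append (u v : List (I ⊕ Bool)) : mono (u ++ v) = mono u * mono v := by simp [mono]

lemma mono_singleton (l : I ⊕ Bool) : mono [l] = FreeAlgebra.ι ℚ l := by simp [mono]

lemma degw_nil (g : (I ⊕ Bool) → ℤ) : degw g ([] : List (I ⊕ Bool)) = 0 := rfl

lemma degw_cons (g : (I ⊕ Bool) → ℤ) (l : I ⊕ Bool) (w : List (I ⊕ Bool)) :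
    degw g (l :: w) = g l + degw g w := by simp [degw]

lemma nab_cons (l : I ⊕ Bool) (w : List (I ⊕ Bool)) :
    nab (l :: w) = (if l.isRight then 1 else 0) + nab w := by
  simp [nab, List.countP_cons]; split <;> simp +arith

lemma sgn_sq (n : ℤ) : ((-1:ℚ) ^ n) * ((-1:ℚ) ^ n) = 1 := by
  rw [← zpow_add₀ (by norm_num : (-1:ℚ) ≠ 0)]
  exact Even.neg_one_zpow ⟨n, by ring⟩

/-- Induction principle: submodule-like predicates holding on monomials hold everywhere. -/
lemma mono_induction (p : FreeAlgebra ℚ (I ⊕ Bool) → Prop)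
    (hmono : ∀ w, p (mono w)) (hzero : p 0)
    (hadd : ∀ x y, p x → p y → p (x + y))
    (hsmul : ∀ (c : ℚ) x, p x → p (c • x)) (x : FreeAlgebra ℚ (I ⊕ Bool)) : p x := by
  have hx : x ∈ Submodule.span ℚ (Set.range (mono (I := I))) := by
    have hmul : ∀ y ∈ Submodule.span ℚ (Set.range (mono (I := I))),
        ∀ z ∈ Submodule.span ℚ (Set.range (mono (I := I))),
        y * z ∈ Submodule.span ℚ (Set.range (mono (I := I))) := by
      intro y hy z hz
      induction hy using Submodule.span_induction with
      | mem y hy =>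
        obtain ⟨u, rfl⟩ := hy
        induction hz using Submodule.span_induction with
        | mem z hz => obtain ⟨v, rfl⟩ := hz
                      exact Submodule.subset_span ⟨u ++ v, mono_append u v⟩
        | zero => simp
        | add a b _ _ ha hb => rw [mul_add]; exact Submodule.add_mem _ ha hb
        | smul c a _ ha => rw [mul_smul_comm]; exact Submodule.smul_mem _ _ ha
      | zero => simp
      | add a b _ _ ha hb => rw [add_mul]; exact Submodule.add_mem _ ha hb
      | smul c a _ ha => rw [smul_mul_assoc]; exact Submodule.smul_mem _ _ ha
    induction x using FreeAlgebra.induction with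
    | grade0 r =>
      have : (algebraMap ℚ _ r) = r • mono ([] : List (I ⊕ Bool)) := by
        simp [mono_nil, Algebra.algebraMap_eq_smul_one]
      rw [this]; exact Submodule.smul_mem _ _ (Submodule.subset_span ⟨[], rfl⟩)
    | grade1 l => exact Submodule.subset_span ⟨[l], mono_singleton l⟩
    | mul a b ha hb => exact hmul a ha b hb
    | add a b ha hb => exact Submodule.add_mem _ ha hb
  induction hx using Submodule.span_induction with
  | mem y hy => obtain ⟨u, rfl⟩ := hy; exact hmono u
  | zero => exact hzero
  | add a b _ _ ha hb => exact hadd a b ha hb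
  | smul c a _ ha => exact hsmul c a ha

/-- The parity involution `σ`, multiplying each monomial by the sign of its degree. -/
lemma sigma_exists (g : (I ⊕ Bool) → ℤ) :
    ∃ σ : FreeAlgebra ℚ (I ⊕ Bool) →ₗ[ℚ] FreeAlgebra ℚ (I ⊕ Bool),
      ∀ w, σ (mono w) = ((-1:ℚ) ^ degw g w) • mono w := by
  refine ⟨(FreeAlgebra.lift ℚ fun l => ((-1:ℚ) ^ g l) • FreeAlgebra.ι ℚ l).toLinearMap, ?_⟩
  intro w
  induction w with
  | nil => simp [mono_nil, degw]
  | cons l u ih =>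
    have hdw : degw g (l :: u) = g l + degw g u := by simp [degw]
    rw [mono_cons]
    simp only [AlgHom.toLinearMap_apply, map_mul] at ih ⊢
    rw [FreeAlgebra.lift_ι_apply, ih, hdw, zpow_add₀ (by norm_num : (-1:ℚ) ≠ 0)]
    rw [smul_mul_assoc, mul_smul_comm, smul_smul]

end Aux

/-- Chain homotopy for stabilization: with `d`, `ĥ` odd graded derivations on the tensor
algebra on `{x_i} ∪ {a,b}` as before (`d(a)=b`, `d(b)=0`, `d(x_i)` in the `x`-subalgebra,
`ĥ(b)=a`, `ĥ(a)=0`, `ĥ(x_i)=0`, and `d² = 0`), define `h(w) = ĥ(w)/n(w)` when `n(w) ≠ 0`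
and `h(w) = 0` otherwise, and let `τ` be the projection fixing the words without `a, b` and
killing the others. Then `h∘d + d∘h = id − τ`; in particular, the inclusion of the
`x`-subalgebra is a quasi-isomorphism: every `d`-cycle differs from a cycle in the
`x`-subalgebra by a `d`-boundary, and a cycle of the `x`-subalgebra which bounds in the big
algebra already bounds in the `x`-subalgebra. -/
theorem stabilization_chain_homotopy {I : Type*}
    (g : (I ⊕ Bool) → ℤ)
    (hg : g (Sum.inr false) = g (Sum.inr true) - 1)
    (d hhat : FreeAlgebra ℚ (I ⊕ Bool) →ₗ[ℚ] FreeAlgebra ℚ (I ⊕ Bool))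
    (hd_a : d (FreeAlgebra.ι ℚ (Sum.inr true)) = FreeAlgebra.ι ℚ (Sum.inr false))
    (hd_b : d (FreeAlgebra.ι ℚ (Sum.inr false)) = 0)
    (hd_x : ∀ i : I, d (FreeAlgebra.ι ℚ (Sum.inl i)) ∈
      Algebra.adjoin ℚ (Set.range fun j : I => FreeAlgebra.ι ℚ (Sum.inl j : I ⊕ Bool)))
    (hd_leibniz : ∀ (u : List (I ⊕ Bool)) (y : FreeAlgebra ℚ (I ⊕ Bool)),
      d (mono u * y) = d (mono u) * y + ((-1 : ℚ) ^ degw g u) • (mono u * d y))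
    (hdd : ∀ x, d (d x) = 0)
    (hh_b : hhat (FreeAlgebra.ι ℚ (Sum.inr false)) = FreeAlgebra.ι ℚ (Sum.inr true))
    (hh_a : hhat (FreeAlgebra.ι ℚ (Sum.inr true)) = 0)
    (hh_x : ∀ i : I, hhat (FreeAlgebra.ι ℚ (Sum.inl i)) = 0)
    (hh_leibniz : ∀ (u : List (I ⊕ Bool)) (y : FreeAlgebra ℚ (I ⊕ Bool)),
      hhat (mono u * y) = hhat (mono u) * y + ((-1 : ℚ) ^ degw g u) • (mono u * hhat y))
    (h τ : FreeAlgebra ℚ (I ⊕ Bool) →ₗ[ℚ] FreeAlgebra ℚ (I ⊕ Bool))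
    (hh_def : ∀ w : List (I ⊕ Bool),
      h (mono w) = if nab w = 0 then 0 else ((nab w : ℚ)⁻¹) • hhat (mono w))
    (hτ_def : ∀ w : List (I ⊕ Bool),
      τ (mono w) = if nab w = 0 then mono w else 0) :
    (∀ x : FreeAlgebra ℚ (I ⊕ Bool), h (d x) + d (h x) = x - τ x) ∧
    (∀ x : FreeAlgebra ℚ (I ⊕ Bool), d x = 0 →
      ∃ s ∈ Algebra.adjoin ℚ (Set.range fun j : I => FreeAlgebra.ι ℚ (Sum.inl j : I ⊕ Bool)),
        d s = 0 ∧ ∃ y, x = s + d y) ∧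
    (∀ s ∈ Algebra.adjoin ℚ (Set.range fun j : I => FreeAlgebra.ι ℚ (Sum.inl j : I ⊕ Bool)),
      d s = 0 → (∃ y, d y = s) →
      ∃ y' ∈ Algebra.adjoin ℚ
        (Set.range fun j : I => FreeAlgebra.ι ℚ (Sum.inl j : I ⊕ Bool)), d y' = s) := by
  obtain ⟨σ, hσ⟩ := sigma_exists g
  have hne : ((-1 : ℚ)) ≠ 0 := by norm_num
  -- d and hhat kill 1
  have d1 : d (1 : FreeAlgebra ℚ (I ⊕ Bool)) = 0 := by
    have := hd_leibniz [] 1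
    simp only [mono_nil, degw_nil, one_mul, mul_one, zpow_zero, one_smul] at this
    exact (left_eq_add.mp this)
  have h1 : hhat (1 : FreeAlgebra ℚ (I ⊕ Bool)) = 0 := by
    have := hh_leibniz [] 1
    simp only [mono_nil, degw_nil, one_mul, mul_one, zpow_zero, one_smul] at this
    exact (left_eq_add.mp this)
  -- single-letter Leibniz
  have dcons : ∀ (l : I ⊕ Bool) (y : FreeAlgebra ℚ (I ⊕ Bool)),
      d (FreeAlgebra.ι ℚ l * y) =
        d (FreeAlgebra.ι ℚ l) * y + ((-1 : ℚ) ^ g l) • (FreeAlgebra.ι ℚ l * d y) := by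
    intro l y
    have := hd_leibniz [l] y
    simpa [mono_singleton, degw] using this
  have hcons : ∀ (l : I ⊕ Bool) (y : FreeAlgebra ℚ (I ⊕ Bool)),
      hhat (FreeAlgebra.ι ℚ l * y) =
        hhat (FreeAlgebra.ι ℚ l) * y + ((-1 : ℚ) ^ g l) • (FreeAlgebra.ι ℚ l * hhat y) := by
    intro l y
    have := hh_leibniz [l] y
    simpa [mono_singleton, degw] using this
  -- the grading by number of a/b letters
  set M : ℕ → Submodule ℚ (FreeAlgebra ℚ (I ⊕ Bool)) :=
    fun n => Submodule.span ℚ {z | ∃ w, nab w = n ∧ mono w = z} with hM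
  have memM : ∀ w : List (I ⊕ Bool), mono w ∈ M (nab w) :=
    fun w => Submodule.subset_span ⟨w, rfl, rfl⟩
  have mulIota : ∀ (l : I ⊕ Bool) (n : ℕ) (z : FreeAlgebra ℚ (I ⊕ Bool)), z ∈ M n →
      FreeAlgebra.ι ℚ l * z ∈ M (nab [l] + n) := by
    intro l n z hz
    induction hz using Submodule.span_induction with
    | mem z hz =>
      obtain ⟨v, hv, rfl⟩ := hz
      rw [← mono_cons]
      have h2 : nab (l :: v) = nab [l] + nab v := by
        rw [nab_cons, nab_cons]; simp [nab]
      rw [← hv, ← h2]; exact memM _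
    | zero => simp
    | add a b _ _ ha hb => rw [mul_add]; exact Submodule.add_mem _ ha hb
    | smul c a _ ha => rw [mul_smul_comm]; exact Submodule.smul_mem _ _ ha
  have mulM0 : ∀ z ∈ M 0, ∀ (n : ℕ) (y : FreeAlgebra ℚ (I ⊕ Bool)), y ∈ M n →
      z * y ∈ M n := by
    intro z hz n y hy
    induction hz using Submodule.span_induction with
    | mem z hz =>
      obtain ⟨v, hv, rfl⟩ := hz
      induction hy using Submodule.span_induction with
      | mem y hy =>
        obtain ⟨u, hu, rfl⟩ := hy
        rw [← mono_append]
        have h3 : nab (v ++ u) = nab v + nab u := List.countP_append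
        have h2 : nab (v ++ u) = n := by rw [h3, hv, hu, zero_add]
        rw [← h2]; exact memM _
      | zero => simp
      | add a b _ _ ha hb => rw [mul_add]; exact Submodule.add_mem _ ha hb
      | smul c a _ ha => rw [mul_smul_comm]; exact Submodule.smul_mem _ _ ha
    | zero => simp
    | add a b _ _ ha hb => rw [add_mul]; exact Submodule.add_mem _ ha hb
    | smul c a _ ha => rw [smul_mul_assoc]; exact Submodule.smul_mem _ _ ha
  have adjM0 : ∀ s ∈ Algebra.adjoin ℚ
      (Set.range fun j : I => FreeAlgebra.ι ℚ (Sum.inl j : I ⊕ Bool)), s ∈ M 0 := by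
    intro s hs
    induction hs using Algebra.adjoin_induction with
    | mem z hz =>
      obtain ⟨j, rfl⟩ := hz
      have h2 : (mono [Sum.inl j] : FreeAlgebra ℚ (I ⊕ Bool)) ∈ M (nab [Sum.inl j]) := memM _
      have h3 : nab ([Sum.inl j] : List (I ⊕ Bool)) = 0 := by simp [nab]
      rw [h3, mono_singleton] at h2
      exact h2
    | algebraMap r =>
      have h2 : (algebraMap ℚ (FreeAlgebra ℚ (I ⊕ Bool)) r)
          = r • mono ([] : List (I ⊕ Bool)) := by
        simp [mono_nil, Algebra.algebraMap_eq_smul_one]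
      rw [h2]
      have h3 : nab ([] : List (I ⊕ Bool)) = 0 := rfl
      exact Submodule.smul_mem _ _ (h3 ▸ memM ([] : List (I ⊕ Bool)))
    | add a b _ _ ha hb => exact Submodule.add_mem _ ha hb
    | mul a b _ _ ha hb => exact mulM0 a ha 0 b hb
  have M0adj : ∀ z ∈ M 0, z ∈ Algebra.adjoin ℚ
      (Set.range fun j : I => FreeAlgebra.ι ℚ (Sum.inl j : I ⊕ Bool)) := by
    intro z hz
    induction hz using Submodule.span_induction with
    | mem z hz =>
      obtain ⟨v, hv, rfl⟩ := hz
      clear memM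
      induction v with
      | nil => rw [mono_nil]; exact one_mem _
      | cons l u ih =>
        rw [nab_cons] at hv
        match l with
        | Sum.inl i =>
          simp only [Sum.isRight, if_false] at hv
          rw [mono_cons]
          exact mul_mem (Algebra.subset_adjoin ⟨i, rfl⟩) (ih (by simpa using hv))
        | Sum.inr c => simp at hv
    | zero => exact zero_mem _
    | add a b _ _ ha hb => exact add_mem ha hb
    | smul c a _ ha => exact Subalgebra.smul_mem _ ha c
  -- hhat vanishes on the x-part
  have hhatMono0 : ∀ w : List (I ⊕ Bool), nab w = 0 → hhat (mono w) = 0 := by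
    intro w
    induction w with
    | nil => intro _; rw [mono_nil]; exact h1
    | cons l u ih =>
      intro hw
      rw [nab_cons] at hw
      match l with
      | Sum.inl i =>
        simp only [Sum.isRight, if_false, zero_add] at hw
        rw [mono_cons, hcons, hh_x i, zero_mul, ih (by simpa using hw), mul_zero,
          smul_zero, add_zero]
      | Sum.inr c => simp at hw
  have hhatM0 : ∀ z ∈ M 0, hhat z = 0 := by
    intro z hz
    induction hz using Submodule.span_induction with
    | mem z hz => obtain ⟨v, hv, rfl⟩ := hz; exact hhatMono0 v hv
    | zero => exact map_zero _
    | add a b _ _ ha hb => rw [map_add, ha, hb, add_zero]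
    | smul c a _ ha => rw [map_smul, ha, smul_zero]
  have hM0 : ∀ z ∈ M 0, h z = 0 := by
    intro z hz
    induction hz using Submodule.span_induction with
    | mem z hz => obtain ⟨v, hv, rfl⟩ := hz; rw [hh_def, if_pos hv]
    | zero => exact map_zero _
    | add a b _ _ ha hb => rw [map_add, ha, hb, add_zero]
    | smul c a _ ha => rw [map_smul, ha, smul_zero]
  have hMn : ∀ n : ℕ, n ≠ 0 → ∀ z ∈ M n, h z = ((n : ℚ)⁻¹) • hhat z := by
    intro n hn z hz
    induction hz using Submodule.span_induction with
    | mem z hz => obtain ⟨v, hv, rfl⟩ := hz; rw [hh_def, if_neg (hv ▸ hn), hv]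
    | zero => rw [map_zero, map_zero, smul_zero]
    | add a b _ _ ha hb => rw [map_add, ha, hb, map_add, smul_add]
    | smul c a _ ha => rw [map_smul, ha, map_smul, smul_comm]
  -- d and hhat preserve the grading
  have G1 : ∀ w : List (I ⊕ Bool), d (mono w) ∈ M (nab w) := by
    intro w
    induction w with
    | nil => rw [mono_nil, d1]; exact zero_mem _
    | cons l u ih =>
      have h2 : nab (l :: u) = nab [l] + nab u := by
        rw [nab_cons, nab_cons]; simp [nab]
      rw [mono_cons, dcons, h2]
      refine Submodule.add_mem _ ?_ (Submodule.smul_mem _ _ (mulIota l (nab u) _ ih))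
      match l with
      | Sum.inl i =>
        have h4 : nab [(Sum.inl i : I ⊕ Bool)] = 0 := by simp [nab]
        rw [h4, zero_add]
        exact mulM0 _ (adjM0 _ (hd_x i)) _ _ (memM u)
      | Sum.inr true =>
        rw [hd_a, ← mono_cons]
        have h4 : nab [(Sum.inr true : I ⊕ Bool)] + nab u = nab (Sum.inr false :: u) := by
          simp [nab, List.countP_cons, Nat.add_comm]
        rw [h4]; exact memM _
      | Sum.inr false => rw [hd_b, zero_mul]; exact zero_mem _
  -- twisted Leibniz rules
  have dL : ∀ (z y : FreeAlgebra ℚ (I ⊕ Bool)), d (z * y) = d z * y + σ z * d y := by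
    intro z y
    induction z using mono_induction with
    | hmono u => rw [hd_leibniz, hσ, smul_mul_assoc]
    | hzero => simp
    | hadd a b ha hb =>
      rw [add_mul, map_add, ha, hb, map_add, map_add, add_mul, add_mul]; abel
    | hsmul c a ha =>
      rw [smul_mul_assoc, map_smul, ha, smul_add, map_smul, map_smul,
        smul_mul_assoc, smul_mul_assoc]
  have hLb : ∀ (z y : FreeAlgebra ℚ (I ⊕ Bool)),
      hhat (z * y) = hhat z * y + σ z * hhat y := by
    intro z y
    induction z using mono_induction with
    | hmono u => rw [hh_leibniz, hσ, smul_mul_assoc]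
    | hzero => simp
    | hadd a b ha hb =>
      rw [add_mul, map_add, ha, hb, map_add, map_add, add_mul, add_mul]; abel
    | hsmul c a ha =>
      rw [smul_mul_assoc, map_smul, ha, smul_add, map_smul, map_smul,
        smul_mul_assoc, smul_mul_assoc]
  -- homogeneity of d (mono w)
  have HOM : ∀ w : List (I ⊕ Bool),
      σ (d (mono w)) = (-((-1 : ℚ) ^ degw g w)) • d (mono w) := by
    intro w
    have L1 : ∀ y, d (d (mono w) * y) =
        (-((-1 : ℚ) ^ degw g w)) • (d (mono w) * d y) := by
      intro y
      have h0 := hdd (mono w * y)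
      rw [hd_leibniz, map_add, map_smul, hd_leibniz, hdd, mul_zero, smul_zero,
        add_zero] at h0
      have h2 := eq_neg_of_add_eq_zero_left h0
      rw [h2, ← neg_smul]
    have L2 : ∀ y, σ (d (mono w)) * d y =
        (-((-1 : ℚ) ^ degw g w)) • (d (mono w) * d y) := by
      intro y
      have h2 := dL (d (mono w)) y
      rw [hdd, zero_mul, zero_add] at h2
      rw [← h2]; exact L1 y
    have h3 := L2 (FreeAlgebra.ι ℚ (Sum.inr true))
    rw [hd_a] at h3
    have h4 : (σ (d (mono w)) - (-((-1 : ℚ) ^ degw g w)) • d (mono w)) *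
        FreeAlgebra.ι ℚ (Sum.inr false) = 0 := by
      rw [sub_mul, smul_mul_assoc, h3, sub_self]
    rcases mul_eq_zero.mp h4 with h5 | h5
    · exact sub_eq_zero.mp h5
    · exact absurd h5 (FreeAlgebra.ι_ne_zero _)
  -- the key Euler identity on monomials
  have KEY : ∀ w : List (I ⊕ Bool),
      hhat (d (mono w)) + d (hhat (mono w)) = ((nab w : ℚ)) • mono w := by
    intro w
    induction w with
    | nil =>
      rw [mono_nil, d1, h1, map_zero, map_zero, add_zero]
      norm_num [nab]
    | cons l u ih =>
      have key2 : FreeAlgebra.ι ℚ l * hhat (d (mono u)) +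
          FreeAlgebra.ι ℚ l * d (hhat (mono u)) =
          ((nab u : ℚ)) • (FreeAlgebra.ι ℚ l * mono u) := by
        rw [← mul_add, ih, mul_smul_comm]
      match l with
      | Sum.inl i =>
        have hE : d (FreeAlgebra.ι ℚ (Sum.inl i : I ⊕ Bool)) =
            d (mono [Sum.inl i]) := by rw [mono_singleton]
        have hhatE : hhat (d (FreeAlgebra.ι ℚ (Sum.inl i : I ⊕ Bool))) = 0 :=
          hhatM0 _ (adjM0 _ (hd_x i))
        have σE : σ (d (FreeAlgebra.ι ℚ (Sum.inl i : I ⊕ Bool))) =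
            (-((-1 : ℚ) ^ g (Sum.inl i : I ⊕ Bool))) •
              d (FreeAlgebra.ι ℚ (Sum.inl i : I ⊕ Bool)) := by
          rw [hE]
          have := HOM [Sum.inl i]
          simpa [degw] using this
        have hN : nab (Sum.inl i :: u) = nab u := by rw [nab_cons]; simp
        rw [mono_cons, dcons, hcons, hh_x, zero_mul, zero_add, map_add, map_smul,
          map_smul, hcons, hh_x, zero_mul, zero_add, dcons, hLb, hhatE, zero_mul,
          zero_add, σE, hN]
        simp only [smul_add, smul_smul, smul_mul_assoc, neg_smul, smul_neg, neg_neg,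
          neg_mul, mul_neg]
        simp only [sgn_sq, one_smul]
        linear_combination (norm := module) key2
      | Sum.inr true =>
        have hεb : ((-1:ℚ) ^ g (Sum.inr false : I ⊕ Bool)) =
            -((-1:ℚ) ^ g (Sum.inr true : I ⊕ Bool)) := by
          rw [hg, zpow_sub₀ hne, zpow_one]; ring
        have hN : nab (Sum.inr true :: u) = nab u + 1 := by
          simp [nab, List.countP_cons, Nat.add_comm]
        rw [mono_cons, dcons, hd_a, hcons, hh_a, zero_mul, zero_add, map_add,
          map_smul, hcons, hh_b, hcons, hh_a, zero_mul, zero_add, map_smul, dcons,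
          hd_a, hεb, hN]
        simp only [smul_add, smul_smul, smul_mul_assoc, neg_smul, smul_neg, neg_neg,
          neg_mul, mul_neg]
        simp only [sgn_sq, one_smul]
        push_cast
        linear_combination (norm := module) key2
      | Sum.inr false =>
        have hεb : ((-1:ℚ) ^ g (Sum.inr false : I ⊕ Bool)) =
            -((-1:ℚ) ^ g (Sum.inr true : I ⊕ Bool)) := by
          rw [hg, zpow_sub₀ hne, zpow_one]; ring
        have hN : nab (Sum.inr false :: u) = nab u + 1 := by
          simp [nab, List.countP_cons, Nat.add_comm]
        rw [mono_cons, dcons, hd_b, zero_mul, zero_add, hcons, hh_b, map_smul,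
          hcons, hh_b, map_add, dcons, hd_a, map_smul, dcons, hd_b, zero_mul,
          zero_add, hεb, hN]
        simp only [smul_add, smul_smul, smul_mul_assoc, neg_smul, smul_neg, neg_neg,
          neg_mul, mul_neg]
        simp only [sgn_sq, one_smul]
        push_cast
        linear_combination (norm := module) key2
  -- the main homotopy identity
  have Hmain : ∀ x : FreeAlgebra ℚ (I ⊕ Bool), h (d x) + d (h x) + τ x = x := by
    intro x
    induction x using mono_induction with
    | hmono w =>
      by_cases hw : nab w = 0
      · rw [hh_def, if_pos hw, map_zero, hτ_def, if_pos hw,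
          hM0 _ (by rw [← hw]; exact (hw ▸ G1 w)), zero_add, zero_add]
      · rw [hh_def, if_neg hw, hτ_def, if_neg hw, add_zero, map_smul,
          hMn (nab w) hw _ (G1 w), ← smul_add, KEY, smul_smul,
          inv_mul_cancel₀ (by exact_mod_cast hw : ((nab w : ℚ)) ≠ 0), one_smul]
    | hzero => simp
    | hadd a b ha hb =>
      rw [map_add, map_add, map_add, map_add, map_add]
      calc h (d a) + h (d b) + (d (h a) + d (h b)) + (τ a + τ b)
          = (h (d a) + d (h a) + τ a) + (h (d b) + d (h b) + τ b) := by abel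
        _ = a + b := by rw [ha, hb]
    | hsmul c a ha =>
      rw [map_smul, map_smul, map_smul, map_smul, map_smul, ← smul_add, ← smul_add, ha]
  have τmem : ∀ x : FreeAlgebra ℚ (I ⊕ Bool), τ x ∈ M 0 := by
    intro x
    induction x using mono_induction with
    | hmono w =>
      rw [hτ_def]
      split
      · next hw => rw [← hw]; exact memM w
      · exact zero_mem _
    | hzero => rw [map_zero]; exact zero_mem _
    | hadd a b ha hb => rw [map_add]; exact Submodule.add_mem _ ha hb
    | hsmul c a ha => rw [map_smul]; exact Submodule.smul_mem _ _ ha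
  refine ⟨?_, ?_, ?_⟩
  · intro x
    have := Hmain x
    exact eq_sub_of_add_eq this
  · intro x hx
    refine ⟨τ x, M0adj _ (τmem x), ?_, h x, ?_⟩
    · have h2 := Hmain x
      rw [hx, map_zero, zero_add] at h2
      have h3 : τ x = x - d (h x) := eq_sub_of_add_eq' h2
      rw [h3, map_sub, hx, hdd, sub_zero]
    · have h2 := Hmain x
      rw [hx, map_zero, zero_add, add_comm] at h2
      exact h2.symm
  · rintro s hs hds ⟨y, rfl⟩
    refine ⟨τ y, M0adj _ (τmem y), ?_⟩
    have h2 := Hmain y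
    rw [hM0 _ (adjM0 _ hs), zero_add] at h2
    have h3 : τ y = y - d (h y) := eq_sub_of_add_eq' h2
    rw [h3, map_sub, hdd, sub_zero]
end
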